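/- Let 𝕂 be a number field of finite degree over ℚ. Then there exists a positive integer ℓ such that for every prime p > 3 not dividing ℓ, and for all distinct j, k ∈ {0, 1, ..., (p−1)/2}, the ratio cos(2πj/p)/cos(2πk/p) does not belong to 𝕂. -/

import Mathlib

open Real Polynomial IntermediateField

noncomputable def zet (n : ℕ) : ℂ := Complex.exp (2 * π * Complex.I / n)

noncomputable def QQ (n : ℕ) : IntermediateField ℚ ℂ := IntermediateField.adjoin ℚ {zet n}

lemma zet_int (n : ℕ) : IsIntegral ℚ (zet n) := by
  rcases eq_or_ne n 0 with rfl | hn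
  · have : zet 0 = 1 := by simp [zet]
    rw [this]; exact isIntegral_one
  · exact ((Complex.isPrimitiveRoot_exp n hn).isIntegral (Nat.pos_of_ne_zero hn)).tower_top

instance (n : ℕ) : FiniteDimensional ℚ (QQ n) :=
  IntermediateField.adjoin.finiteDimensional (zet_int n)

lemma finrank_QQ {n : ℕ} (hn : n ≠ 0) : Module.finrank ℚ (QQ n) = n.totient := by
  have hm : minpoly ℚ (zet n) = cyclotomic n ℚ :=
    (cyclotomic_eq_minpoly_rat (Complex.isPrimitiveRoot_exp n hn) (Nat.pos_of_ne_zero hn)).symm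
  rw [QQ, IntermediateField.adjoin.finrank (zet_int n), hm, natDegree_cyclotomic]

lemma zet_pow (p q : ℕ) (hp : p ≠ 0) (hq : q ≠ 0) : (zet (p*q))^q = zet p := by
  rw [zet, zet, ← Complex.exp_nat_mul]
  congr 1
  have : (p:ℂ) ≠ 0 := Nat.cast_ne_zero.2 hp
  have : (q:ℂ) ≠ 0 := Nat.cast_ne_zero.2 hq
  push_cast
  field_simp

lemma QQ_le (p q : ℕ) (hp : p ≠ 0) (hq : q ≠ 0) : QQ p ≤ QQ (p*q) := by
  rw [QQ, IntermediateField.adjoin_le_iff]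
  rintro x rfl
  rw [← zet_pow p q hp hq]
  exact pow_mem (IntermediateField.mem_adjoin_simple_self ℚ _) q

lemma QQ_sup (p q : ℕ) (hpq : Nat.Coprime p q) (hp : p ≠ 0) (hq : q ≠ 0) :
    QQ p ⊔ QQ q = QQ (p*q) := by
  apply le_antisymm
  · exact sup_le (QQ_le p q hp hq) (by rw [mul_comm]; exact QQ_le q p hq hp)
  · rw [QQ, IntermediateField.adjoin_le_iff]
    rintro x rfl
    obtain ⟨a, b, hab⟩ : ∃ a b : ℤ, a * p + b * q = 1 := by
      obtain ⟨a, b, h⟩ := Nat.isCoprime_iff_coprime.2 hpq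
      exact ⟨a, b, h⟩
    have hz : zet (p*q) ≠ 0 := Complex.exp_ne_zero _
    have h1 : zet (p*q) = (zet (p*q))^(a*p+b*q) := by rw [hab, zpow_one]
    rw [h1, zpow_add₀ hz, mul_comm a (p:ℤ), mul_comm b (q:ℤ), zpow_mul, zpow_mul]
    have e1 : (zet (p*q))^(p:ℤ) = zet q := by
      rw [zpow_natCast, mul_comm p q]; exact zet_pow q p hq hp
    have e2 : (zet (p*q))^(q:ℤ) = zet p := by
      rw [zpow_natCast]; exact zet_pow p q hp hq
    rw [e1, e2]
    apply mul_mem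
    · exact zpow_mem (le_sup_right (α := IntermediateField ℚ ℂ) (a := QQ p)
        (IntermediateField.mem_adjoin_simple_self ℚ _)) a
    · exact zpow_mem (le_sup_left (α := IntermediateField ℚ ℂ) (b := QQ q)
        (IntermediateField.mem_adjoin_simple_self ℚ _)) b

lemma QQ_inf (p q : ℕ) (hp : p.Prime) (hq : q.Prime) (hne : p ≠ q) : QQ p ⊓ QQ q = ⊥ := by
  have hcop : Nat.Coprime p q := (Nat.coprime_primes hp hq).2 hne
  have h1 : Module.finrank ℚ ↥(QQ p ⊔ QQ q)
      = Module.finrank ℚ (QQ p) * Module.finrank ℚ (QQ q) := by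
    rw [QQ_sup p q hcop hp.ne_zero hq.ne_zero, finrank_QQ (mul_ne_zero hp.ne_zero hq.ne_zero),
      finrank_QQ hp.ne_zero, finrank_QQ hq.ne_zero, Nat.totient_mul hcop]
  exact (IntermediateField.LinearDisjoint.of_finrank_sup h1).inf_eq_bot

lemma finite_bad (K : IntermediateField ℚ ℂ) (hK : FiniteDimensional ℚ K) :
    {p : ℕ | p.Prime ∧ K ⊓ QQ p ≠ ⊥}.Finite := by
  have hfin : Finite (IntermediateField ℚ K) :=
    Field.finite_intermediateField_of_exists_primitive_element ℚ K
      (Field.exists_primitive_element ℚ K)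
  have hIic : (Set.Iic K).Finite := by
    apply Set.Finite.of_finite_image (f := fun F => IntermediateField.comap K.val F)
      (Set.Finite.subset (@Set.finite_univ _ hfin) (Set.subset_univ _))
    intro F1 h1 F2 h2 he
    have r1 : IntermediateField.map K.val (IntermediateField.comap K.val F1) = F1 :=
      IntermediateField.map_comap_eq_self (by rwa [IntermediateField.fieldRange_val])
    have r2 : IntermediateField.map K.val (IntermediateField.comap K.val F2) = F2 :=
      IntermediateField.map_comap_eq_self (by rwa [IntermediateField.fieldRange_val])
    simp only at he
    rw [← r1, ← r2, he]
  apply Set.Finite.of_finite_image (f := fun p => K ⊓ QQ p)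
  · exact hIic.subset (by rintro x ⟨p, _, rfl⟩; exact Set.mem_Iic.2 inf_le_left)
  · intro p hp q hq he
    by_contra hne
    simp only at he
    have hb : K ⊓ QQ p ≤ ⊥ := by
      rw [← QQ_inf p q hp.1 hq.1 hne]
      exact le_inf (le_trans (le_of_eq rfl) inf_le_right) (le_trans (le_of_eq he) inf_le_right)
    exact hp.2 (le_bot_iff.1 hb)

lemma zet_pow_mod (p : ℕ) (hp : p ≠ 0) (a : ℕ) : zet p ^ (a % p) = zet p ^ a := by
  have h1 : zet p ^ p = 1 := by
    rw [zet, ← Complex.exp_nat_mul]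
    have hpc : (p:ℂ) ≠ 0 := Nat.cast_ne_zero.2 hp
    rw [show (p:ℂ) * (2 * ↑π * Complex.I / ↑p) = 2 * ↑π * Complex.I by
      field_simp]
    exact Complex.exp_two_pi_mul_I
  conv_rhs => rw [← Nat.div_add_mod a p, pow_add, pow_mul, h1, one_pow, one_mul]

lemma cos_zet (p m : ℕ) (hp : p ≠ 0) (hm : m ≤ p) :
    ((Real.cos (2*π*m/p) : ℝ) : ℂ) * 2 = zet p ^ m + zet p ^ ((p - m) % p) := by
  have hpc : (p:ℂ) ≠ 0 := Nat.cast_ne_zero.2 hp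
  have h1 : zet p ^ m = Complex.exp (↑m * (2*↑π*Complex.I/↑p)) := by
    rw [zet, ← Complex.exp_nat_mul]
  have h2 : zet p ^ ((p - m) % p) = Complex.exp (-(↑m * (2*↑π*Complex.I/↑p))) := by
    rw [zet_pow_mod p hp, zet, ← Complex.exp_nat_mul,
      show ((p - m : ℕ):ℂ) * (2*↑π*Complex.I/↑p)
        = 2*↑π*Complex.I + -((m:ℂ) * (2*↑π*Complex.I/↑p)) by
        rw [Nat.cast_sub hm]; field_simp; ring,
      Complex.exp_add, Complex.exp_two_pi_mul_I, one_mul]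
  rw [h1, h2, Complex.ofReal_cos, Complex.cos]
  rw [show ((2*π*(m:ℝ)/p : ℝ) : ℂ) * Complex.I = ↑m * (2*↑π*Complex.I/↑p) by
    push_cast; field_simp]
  field_simp
  congr 2
  push_cast
  ring

lemma zet_not_rat_rel (p : ℕ) (hp : p.Prime) (hp5 : 5 ≤ p) (j k : ℕ)
    (hj : j ≤ (p-1)/2) (hk : k ≤ (p-1)/2) (hjk : j ≠ k) (r : ℚ) :
    zet p ^ j + zet p ^ ((p - j) % p) ≠ (r : ℂ) * (zet p ^ k + zet p ^ ((p - k) % p)) := by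
  intro heq
  have hp0 : p ≠ 0 := hp.ne_zero
  have hprim : IsPrimitiveRoot (zet p) p := Complex.isPrimitiveRoot_exp p hp0
  set ζ := zet p with hζ
  set f : ℚ[X] := X^j + X^((p-j)%p) - C r * X^k - C r * X^((p-k)%p) with hf
  have hejlt : (p - j) % p < p := Nat.mod_lt _ hp.pos
  have heklt : (p - k) % p < p := Nat.mod_lt _ hp.pos
  have hjek : j ≠ (p - k) % p := by
    rcases Nat.eq_zero_or_pos k with rfl | hk1
    · simpa [Nat.mod_self] using hjk
    · rw [Nat.mod_eq_of_lt (by omega)]; omega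
  have hkej : k ≠ (p - j) % p := by
    rcases Nat.eq_zero_or_pos j with rfl | hj1
    · simpa [Nat.mod_self] using hjk.symm
    · rw [Nat.mod_eq_of_lt (by omega)]; omega
  have hev : aeval ζ f = 0 := by
    simp only [hf, map_add, map_sub, map_mul, map_pow, aeval_X, aeval_C]
    rw [eq_ratCast (algebraMap ℚ ℂ)]
    linear_combination heq
  have hdvd : cyclotomic p ℚ ∣ f := by
    rw [cyclotomic_eq_minpoly_rat hprim hp.pos]
    exact minpoly.dvd ℚ ζ hev
  have hfdeg : f.natDegree ≤ p - 1 := by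
    have b1 : (X^j + X^((p-j)%p) : ℚ[X]).natDegree ≤ p - 1 := by
      apply le_trans (natDegree_add_le _ _)
      simp only [natDegree_X_pow]; omega
    have b2 : (C r * X^k : ℚ[X]).natDegree ≤ p - 1 := by
      apply le_trans (natDegree_mul_le)
      simp only [natDegree_C, natDegree_X_pow]; omega
    have b3 : (C r * X^((p-k)%p) : ℚ[X]).natDegree ≤ p - 1 := by
      apply le_trans (natDegree_mul_le)
      simp only [natDegree_C, natDegree_X_pow]; omega
    apply le_trans (natDegree_sub_le _ _)
    apply max_le _ b3
    exact le_trans (natDegree_sub_le _ _) (max_le b1 b2)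
  have hfz : f = 0 := by
    by_contra hne
    obtain ⟨g, hg⟩ := hdvd
    have hgne : g ≠ 0 := by rintro rfl; rw [mul_zero] at hg; exact hne hg
    have hcycdeg : (cyclotomic p ℚ).natDegree = p - 1 := by
      rw [natDegree_cyclotomic, Nat.totient_prime hp]
    have hdeq : f.natDegree = (p - 1) + g.natDegree := by
      rw [hg, natDegree_mul (cyclotomic_ne_zero p ℚ) hgne, hcycdeg]
    have hg0 : g.natDegree = 0 := by omega
    obtain ⟨c, rfl⟩ : ∃ c, g = C c := ⟨g.coeff 0, (eq_C_of_natDegree_eq_zero hg0)⟩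
    obtain ⟨i, hilt, hi1, hi2, hi3, hi4⟩ :
        ∃ i, i < p ∧ i ≠ j ∧ i ≠ (p-j)%p ∧ i ≠ k ∧ i ≠ (p-k)%p := by
      by_contra hcon
      push_neg at hcon
      have hsub : Finset.range p ⊆ {j, (p-j)%p, k, (p-k)%p} := by
        intro i hi
        simp only [Finset.mem_insert, Finset.mem_singleton]
        by_contra hni
        push_neg at hni
        obtain ⟨a, b, c', d⟩ := hni
        exact d (hcon i (Finset.mem_range.1 hi) a b c')
      have := Finset.card_le_card hsub
      simp only [Finset.card_range] at this
      have h4 : ({j, (p-j)%p, k, (p-k)%p} : Finset ℕ).card ≤ 4 := by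
        apply le_trans (Finset.card_insert_le _ _)
        apply Nat.succ_le_succ
        apply le_trans (Finset.card_insert_le _ _)
        apply Nat.succ_le_succ
        apply le_trans (Finset.card_insert_le _ _)
        simp
      omega
    have hcf : f.coeff i = 0 := by
      simp [hf, coeff_X_pow, hi1, hi2, hi3, hi4, Ne.symm hi1, Ne.symm hi2, Ne.symm hi3,
        Ne.symm hi4]
    have hcc : f.coeff i = c := by
      have : Fact p.Prime := ⟨hp⟩
      rw [hg, cyclotomic_prime ℚ p, coeff_mul_C, finset_sum_coeff]
      simp only [coeff_X_pow]
      rw [Finset.sum_ite_eq (Finset.range p) i (fun _ => (1:ℚ))]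
      simp [Finset.mem_range.2 hilt]
    rw [hcf] at hcc
    rw [← hcc] at hg
    simp only [map_zero, mul_zero] at hg
    exact hne hg
  have h0 : f.coeff j = 0 := by rw [hfz]; simp
  rw [hf] at h0
  simp only [coeff_add, coeff_sub, coeff_C_mul, coeff_X_pow] at h0
  rw [if_pos trivial, if_neg hjk, if_neg hjek] at h0
  split_ifs at h0 <;> norm_num at h0

/-- For every number field `𝕂 ⊆ ℂ` of finite degree over `ℚ` there exists a positive integer `ℓ`
such that for every prime `p > 3` not dividing `ℓ` and all distinct
`j, k ∈ {0, 1, ..., (p−1)/2}`, the ratio `cos(2πj/p)/cos(2πk/p)` does not belong to `𝕂`. -/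
theorem stmt6 (K : IntermediateField ℚ ℂ) (hK : FiniteDimensional ℚ K) :
    ∃ ℓ : ℕ, 0 < ℓ ∧ ∀ p : ℕ, p.Prime → 3 < p → ¬ (p ∣ ℓ) →
      ∀ j k : ℕ, j ≤ (p - 1) / 2 → k ≤ (p - 1) / 2 → j ≠ k →
        ((Real.cos (2 * π * j / p) / Real.cos (2 * π * k / p) : ℝ) : ℂ) ∉ K := by
  classical
  have hS := finite_bad K hK
  refine ⟨hS.toFinset.prod id, Finset.prod_pos (fun q hq => ?_), ?_⟩
  · exact (hS.mem_toFinset.1 hq).1.pos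
  · intro p hp hp3 hpl j k hj hk hjk hmem
    have hp5 : 5 ≤ p := by
      rcases Nat.lt_or_ge p 5 with h | h
      · interval_cases p <;> simp_all (config := {decide := true})
      · exact h
    have hbot : K ⊓ QQ p = ⊥ := by
      by_contra h
      exact hpl (Finset.dvd_prod_of_mem id (hS.mem_toFinset.2 ⟨hp, h⟩))
    have hp0 : p ≠ 0 := hp.ne_zero
    set ζ := zet p with hζ
    have hjp : j ≤ p := by omega
    have hkp : k ≤ p := by omega
    have hx : ((Real.cos (2 * π * j / p) / Real.cos (2 * π * k / p) : ℝ) : ℂ)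
        = (ζ^j + ζ^((p-j)%p)) / (ζ^k + ζ^((p-k)%p)) := by
      rw [Complex.ofReal_div, ← cos_zet p j hp0 hjp, ← cos_zet p k hp0 hkp,
        mul_div_mul_right _ _ (two_ne_zero)]
    have hzQ : ζ ∈ QQ p := IntermediateField.mem_adjoin_simple_self ℚ _
    have hmemQ : ((Real.cos (2 * π * j / p) / Real.cos (2 * π * k / p) : ℝ) : ℂ) ∈ QQ p := by
      rw [hx]
      exact div_mem (add_mem (pow_mem hzQ _) (pow_mem hzQ _))
        (add_mem (pow_mem hzQ _) (pow_mem hzQ _))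
    have hmb : ((Real.cos (2 * π * j / p) / Real.cos (2 * π * k / p) : ℝ) : ℂ)
        ∈ (⊥ : IntermediateField ℚ ℂ) := by
      rw [← hbot]; exact ⟨hmem, hmemQ⟩
    obtain ⟨r, hr⟩ := IntermediateField.mem_bot.1 hmb
    have hD : ζ^k + ζ^((p-k)%p) ≠ 0 := by
      have := zet_not_rat_rel p hp hp5 k j hk hj hjk.symm 0
      simpa using this
    have hrr : (r : ℂ) = (ζ^j + ζ^((p-j)%p)) / (ζ^k + ζ^((p-k)%p)) := by
      rw [← hx, ← hr, eq_ratCast (algebraMap ℚ ℂ)]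
    rw [eq_div_iff hD] at hrr
    exact zet_not_rat_rel p hp hp5 j k hj hk hjk r hrr.symm
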